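/- For any λ ∈ (0,1], the following identity holds: ∑_{k≥1, k'≥0} (e^{-λ} λ^{k-1}/k!) · (e^{-(1-λ)} (1-λ)^{k'}/k'!) · k/(k+k') = 1 - 1/e. -/

import Mathlib

open Real

private lemma tsum_prod_eq_tsum_antidiag {F : ℕ × ℕ → ℝ} (hF : Summable F) :
    ∑' p : ℕ × ℕ, F p = ∑' n, ∑ kl ∈ Finset.HasAntidiagonal.antidiagonal n, F kl := by
  conv_rhs => congr; ext; rw [← Finset.sum_finset_coe, ← tsum_fintype (L := .unconditional _)]
  rw [← Finset.HasAntidiagonal.sigmaAntidiagonalEquivProd.tsum_eq F]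
  exact Summable.tsum_sigma' (fun n => (hasSum_fintype _).summable)
    (Finset.HasAntidiagonal.sigmaAntidiagonalEquivProd.summable_iff.mpr hF)

private lemma binom_sum (x y : ℝ) (n : ℕ) :
    ∑ k ∈ Finset.range (n + 1), x ^ k * y ^ (n - k) / (Nat.factorial k * Nat.factorial (n - k)) =
      (x + y) ^ n / Nat.factorial n := by
  rw [add_pow, Finset.sum_div]
  refine Finset.sum_congr rfl fun k hk => ?_
  have hk' : k ≤ n := Nat.lt_succ_iff.mp (Finset.mem_range.mp hk)
  rw [Nat.cast_choose ℝ hk']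
  have h1 : (Nat.factorial k : ℝ) ≠ 0 := Nat.cast_ne_zero.mpr (Nat.factorial_ne_zero k)
  have h2 : (Nat.factorial (n - k) : ℝ) ≠ 0 := Nat.cast_ne_zero.mpr (Nat.factorial_ne_zero _)
  have h3 : (Nat.factorial n : ℝ) ≠ 0 := Nat.cast_ne_zero.mpr (Nat.factorial_ne_zero n)
  field_simp

private lemma exp_one_eq_tsum : Real.exp 1 = ∑' n : ℕ, (1 : ℝ) / Nat.factorial n := by
  rw [Real.exp_eq_exp_ℝ, NormedSpace.exp_eq_tsum_div]
  simp

private noncomputable def myF (lam : ℝ) : ℕ × ℕ → ℝ := fun p =>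
  Real.exp (-1) * (lam ^ p.1 / Nat.factorial p.1) * ((1 - lam) ^ p.2 / Nat.factorial p.2) *
    (1 / (p.1 + p.2 + 1))

private lemma myF_nonneg {lam : ℝ} (hlam : 0 ≤ lam) (hlam1 : lam ≤ 1) (p : ℕ × ℕ) :
    0 ≤ myF lam p := by
  have h1 : (0:ℝ) ≤ 1 - lam := by linarith
  have := pow_nonneg h1 p.2
  have := pow_nonneg hlam p.1
  unfold myF
  positivity

private lemma myF_summable {lam : ℝ} (hlam : 0 ≤ lam) (hlam1 : lam ≤ 1) :
    Summable (myF lam) := by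
  have h1lam : (0:ℝ) ≤ 1 - lam := by linarith
  have ha : Summable fun k : ℕ => lam ^ k / Nat.factorial k := by
    simpa using Real.summable_pow_div_factorial lam
  have hb : Summable fun k : ℕ => (1 - lam) ^ k / Nat.factorial k := by
    simpa using Real.summable_pow_div_factorial (1 - lam)
  have hprod : Summable fun p : ℕ × ℕ =>
      (lam ^ p.1 / Nat.factorial p.1) * ((1 - lam) ^ p.2 / Nat.factorial p.2) := by
    refine ha.mul_of_nonneg hb (fun k => ?_) (fun k => ?_) <;> positivity
  refine Summable.of_nonneg_of_le (myF_nonneg hlam hlam1) (fun p => ?_)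
    (hprod.mul_left (Real.exp (-1)))
  unfold myF
  have hpos : (0 : ℝ) < (p.1 : ℝ) + p.2 + 1 := by positivity
  have hle : 1 / ((p.1 : ℝ) + p.2 + 1) ≤ 1 := by
    rw [div_le_one hpos]
    linarith [Nat.cast_nonneg (α := ℝ) p.1, Nat.cast_nonneg (α := ℝ) p.2]
  have hnn : 0 ≤ Real.exp (-1) * (lam ^ p.1 / Nat.factorial p.1) *
      ((1 - lam) ^ p.2 / Nat.factorial p.2) := by
    have := pow_nonneg h1lam p.2
    have := pow_nonneg hlam p.1
    positivity
  calc Real.exp (-1) * (lam ^ p.1 / Nat.factorial p.1) *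
        ((1 - lam) ^ p.2 / Nat.factorial p.2) * (1 / ((p.1 : ℝ) + p.2 + 1))
      ≤ Real.exp (-1) * (lam ^ p.1 / Nat.factorial p.1) *
        ((1 - lam) ^ p.2 / Nat.factorial p.2) * 1 := mul_le_mul_of_nonneg_left hle hnn
    _ = Real.exp (-1) * ((lam ^ p.1 / Nat.factorial p.1) *
        ((1 - lam) ^ p.2 / Nat.factorial p.2)) := by ring

private lemma myF_antidiag_sum (lam : ℝ) (n : ℕ) :
    ∑ kl ∈ Finset.HasAntidiagonal.antidiagonal n, myF lam kl
      = Real.exp (-1) * (1 / Nat.factorial (n + 1)) := by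
  rw [Finset.Nat.sum_antidiagonal_eq_sum_range_succ_mk]
  have key : ∀ k ∈ Finset.range (n + 1), myF lam (k, n - k)
      = Real.exp (-1) * (1 / ((n : ℝ) + 1)) *
        (lam ^ k * (1 - lam) ^ (n - k) / (Nat.factorial k * Nat.factorial (n - k))) := by
    intro k hk
    have hk' : k ≤ n := Nat.lt_succ_iff.mp (Finset.mem_range.mp hk)
    have hcast : ((k : ℝ) + ((n - k : ℕ) : ℝ)) = n := by
      rw [Nat.cast_sub hk']; ring
    unfold myF
    simp only [hcast]
    ring
  rw [Finset.sum_congr rfl key, ← Finset.mul_sum, binom_sum]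
  have hlam1 : lam + (1 - lam) = 1 := by ring
  rw [hlam1, one_pow]
  have hfac : ((Nat.factorial (n + 1) : ℝ)) = (n + 1) * Nat.factorial n := by
    rw [Nat.factorial_succ]; push_cast; ring
  rw [hfac]
  have h1 : (Nat.factorial n : ℝ) ≠ 0 := Nat.cast_ne_zero.mpr (Nat.factorial_ne_zero n)
  have h2 : ((n : ℝ) + 1) ≠ 0 := by positivity
  field_simp

theorem stmt_2 (lam : ℝ) (hlam : 0 < lam) (hlam1 : lam ≤ 1) :
    (∑' k : ℕ, ∑' k' : ℕ,
        (Real.exp (-lam) * lam ^ ((k + 1) - 1) / (Nat.factorial (k + 1))) *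
        (Real.exp (-(1 - lam)) * (1 - lam) ^ k' / (Nat.factorial k')) *
        ((k + 1 : ℝ) / ((k + 1 : ℝ) + (k' : ℝ))))
      = 1 - 1 / Real.exp 1 := by
  have hFsum : Summable (myF lam) := myF_summable hlam.le hlam1
  have hterm : ∀ k k' : ℕ,
      (Real.exp (-lam) * lam ^ ((k + 1) - 1) / (Nat.factorial (k + 1))) *
        (Real.exp (-(1 - lam)) * (1 - lam) ^ k' / (Nat.factorial k')) *
        ((k + 1 : ℝ) / ((k + 1 : ℝ) + (k' : ℝ))) = myF lam (k, k') := by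
    intro k k'
    have hexp : Real.exp (-lam) * Real.exp (-(1 - lam)) = Real.exp (-1) := by
      rw [← Real.exp_add]; ring_nf
    have hfac : ((Nat.factorial (k + 1) : ℝ)) = (k + 1) * Nat.factorial k := by
      rw [Nat.factorial_succ]; push_cast; ring
    have h1 : (Nat.factorial k : ℝ) ≠ 0 := Nat.cast_ne_zero.mpr (Nat.factorial_ne_zero k)
    have h2 : (Nat.factorial k' : ℝ) ≠ 0 := Nat.cast_ne_zero.mpr (Nat.factorial_ne_zero k')
    have h3 : ((k : ℝ) + 1 + k') ≠ 0 := by positivity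
    have h5 : ((k : ℝ) + (k' : ℝ) + 1) ≠ 0 := by positivity
    unfold myF
    simp only [Nat.add_sub_cancel]
    rw [hfac, ← hexp]
    field_simp
    ring
  have hL : (∑' k : ℕ, ∑' k' : ℕ,
      (Real.exp (-lam) * lam ^ ((k + 1) - 1) / (Nat.factorial (k + 1))) *
        (Real.exp (-(1 - lam)) * (1 - lam) ^ k' / (Nat.factorial k')) *
        ((k + 1 : ℝ) / ((k + 1 : ℝ) + (k' : ℝ)))) = ∑' p : ℕ × ℕ, myF lam p := by
    rw [Summable.tsum_prod' hFsum]
    · exact tsum_congr fun k => tsum_congr fun k' => hterm k k'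
    · exact fun k => (hFsum.prod_factor k)
  rw [hL, tsum_prod_eq_tsum_antidiag hFsum, tsum_congr (myF_antidiag_sum lam)]
  have hsf : Summable fun n : ℕ => (1 : ℝ) / Nat.factorial n := by
    simpa using Real.summable_pow_div_factorial 1
  have hsf1 : Summable fun n : ℕ => (1 : ℝ) / Nat.factorial (n + 1) :=
    (summable_nat_add_iff 1).mpr hsf
  have hshift : ∑' n : ℕ, (1 : ℝ) / Nat.factorial n
      = 1 / Nat.factorial 0 + ∑' n : ℕ, (1 : ℝ) / Nat.factorial (n + 1) :=
    Summable.tsum_eq_zero_add hsf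
  have htail : ∑' n : ℕ, (1 : ℝ) / Nat.factorial (n + 1) = Real.exp 1 - 1 := by
    rw [← exp_one_eq_tsum] at hshift
    simp only [Nat.factorial_zero, Nat.cast_one] at hshift
    linarith
  rw [tsum_mul_left, htail, Real.exp_neg]
  have := Real.exp_pos 1
  field_simp
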